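/- In the twisted CDO on ℙ¹, under the map e ↦ ∂_x, h ↦ −2(∂_x)₍₋₁₎x + λ*, f ↦ −(∂_x)₍₋₁₎x² − 2∂(x) + x₍₋₁₎λ*, the Sugawara-type central element T = e₍₋₁₎f + f₍₋₁₎e + (1/2)h₍₋₁₎h of V_{−2}(sl₂) maps to (1/2)λ*₍₋₁₎λ* − ∂(λ*) in the commutative vertex algebra H_{ℙ¹} = ℂ[λ*, ∂λ*, ...]. -/

import Mathlib

/-- Generalized binomial coefficient `C(m, j)` for an integer `m` and natural `j`. -/
def zchoose (m : ℤ) (j : ℕ) : ℤ := (∏ i ∈ Finset.range j, (m - i)) / (j.factorial : ℤ)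

/-- A (ℤ-graded-style) vertex algebra over `ℂ`: a vector space with `n`-th products
`a ₍ₙ₎ b`, a vacuum vector satisfying the vacuum axioms, locality (fields), and the
Borcherds identity. -/
structure VertexAlgebraC (V : Type*) [AddCommGroup V] [Module ℂ V] where
  nprod : V → ℤ → V → V
  vac : V
  nprod_add_left : ∀ a n b c, nprod (a + b) n c = nprod a n c + nprod b n c
  nprod_add_right : ∀ a n b c, nprod a n (b + c) = nprod a n b + nprod a n c
  nprod_smul_left : ∀ (r : ℂ) a n b, nprod (r • a) n b = r • nprod a n b
  nprod_smul_right : ∀ (r : ℂ) a n b, nprod a n (r • b) = r • nprod a n b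
  locality : ∀ a b, ∃ N : ℕ, ∀ n : ℤ, (N : ℤ) ≤ n → nprod a n b = 0
  vac_prod : ∀ (n : ℤ) (a : V), nprod vac n a = if n = -1 then a else 0
  prod_vac_neg_one : ∀ a, nprod a (-1) vac = a
  prod_vac_nonneg : ∀ (a : V) (n : ℤ), 0 ≤ n → nprod a n vac = 0
  borcherds : ∀ (a b c : V) (m n k : ℤ),
    (∑ᶠ j : ℕ, zchoose m j • nprod (nprod a (n + j) b) (m + k - j) c)
      = ∑ᶠ j : ℕ, ((-1 : ℤ) ^ j * zchoose n j) •
          (nprod a (m + n - j) (nprod b (k + j) c)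
            - (Int.negOnePow n : ℤ) • nprod b (n + k - j) (nprod a (m + j) c))

/-- The translation operator `∂a = a₍₋₂₎|0⟩` of a vertex algebra. -/
def VertexAlgebraC.tr {V : Type*} [AddCommGroup V] [Module ℂ V]
    (W : VertexAlgebraC V) (a : V) : V := W.nprod a (-2) W.vac

namespace VertexAlgebraC

variable {V : Type*} [AddCommGroup V] [Module ℂ V] (W : VertexAlgebraC V)

lemma np_zero_left (n : ℤ) (c : V) : W.nprod 0 n c = 0 := by
  have := W.nprod_smul_left 0 0 n c; simpa using this

lemma np_zero_right (a : V) (n : ℤ) : W.nprod a n 0 = 0 := by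
  have := W.nprod_smul_right 0 a n 0; simpa using this

lemma np_neg_left (a : V) (n : ℤ) (c : V) : W.nprod (-a) n c = - W.nprod a n c := by
  have := W.nprod_smul_left (-1) a n c; simpa using this

lemma np_neg_right (a : V) (n : ℤ) (c : V) : W.nprod a n (-c) = - W.nprod a n c := by
  have := W.nprod_smul_right (-1) a n c; simpa using this

lemma np_sub_left (a b : V) (n : ℤ) (c : V) :
    W.nprod (a - b) n c = W.nprod a n c - W.nprod b n c := by
  rw [sub_eq_add_neg, W.nprod_add_left, W.np_neg_left, sub_eq_add_neg]

lemma np_sub_right (a : V) (n : ℤ) (b c : V) :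
    W.nprod a n (b - c) = W.nprod a n b - W.nprod a n c := by
  rw [sub_eq_add_neg, W.nprod_add_right, W.np_neg_right, sub_eq_add_neg]

lemma zchoose_zero' (m : ℤ) : zchoose m 0 = 1 := by simp [zchoose]

lemma zchoose_zero_pos (j : ℕ) (hj : 1 ≤ j) : zchoose 0 j = 0 := by
  have h0 : (0:ℕ) ∈ Finset.range j := by simp; omega
  rw [zchoose, Finset.prod_eq_zero h0 (by simp), Int.zero_ediv]

lemma zchoose_neg_one (j : ℕ) : zchoose (-1) j = (-1) ^ j := by
  have hp : (∏ i ∈ Finset.range j, ((-1 : ℤ) - i)) = (-1) ^ j * j.factorial := by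
    induction j with
    | zero => simp
    | succ n ih =>
      rw [Finset.prod_range_succ, ih, Nat.factorial_succ]
      push_cast; ring
  rw [zchoose, hp, Int.mul_ediv_cancel]
  exact_mod_cast j.factorial_ne_zero

lemma borch_trunc (a b c : V) (m n k : ℤ) (N₁ N₂ : ℕ)
    (h₁ : ∀ j : ℕ, N₁ ≤ j → zchoose m j • W.nprod (W.nprod a (n + j) b) (m + k - j) c = 0)
    (h₂ : ∀ j : ℕ, N₂ ≤ j → ((-1 : ℤ) ^ j * zchoose n j) •
          (W.nprod a (m + n - j) (W.nprod b (k + j) c)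
            - (Int.negOnePow n : ℤ) • W.nprod b (n + k - j) (W.nprod a (m + j) c)) = 0) :
    ∑ j ∈ Finset.range N₁, zchoose m j • W.nprod (W.nprod a (n + j) b) (m + k - j) c
      = ∑ j ∈ Finset.range N₂, ((-1 : ℤ) ^ j * zchoose n j) •
          (W.nprod a (m + n - j) (W.nprod b (k + j) c)
            - (Int.negOnePow n : ℤ) • W.nprod b (n + k - j) (W.nprod a (m + j) c)) := by
  have hb := W.borcherds a b c m n k
  rw [finsum_eq_sum_of_support_subset _ (s := Finset.range N₁) ?_,
      finsum_eq_sum_of_support_subset _ (s := Finset.range N₂) ?_] at hb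
  · exact hb
  · intro j hj
    simp only [Finset.coe_range, Set.mem_Iio]
    by_contra hN
    exact hj (h₂ j (by omega))
  · intro j hj
    simp only [Finset.coe_range, Set.mem_Iio]
    by_contra hN
    exact hj (h₁ j (by omega))


/-- Commutator/Wick formula: specialization of Borcherds at `n = 0`. -/
lemma wick (a b c : V) (m k : ℤ) (N : ℕ) (h : ∀ j : ℕ, N ≤ j → W.nprod a j b = 0) :
    W.nprod a m (W.nprod b k c) = W.nprod b k (W.nprod a m c)
      + ∑ j ∈ Finset.range N, zchoose m j • W.nprod (W.nprod a j b) (m + k - j) c := by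
  have h0 := W.borch_trunc a b c m 0 k N 1 ?_ ?_
  · simp only [zero_add] at h0
    simp only [Finset.sum_range_one, Nat.cast_zero, pow_zero, zchoose_zero', one_mul,
      add_zero, sub_zero, Int.negOnePow_zero, Units.val_one, one_smul] at h0
    rw [h0]; abel
  · intro j hj
    rw [zero_add, h j hj, W.np_zero_left, smul_zero]
  · intro j hj
    rw [zchoose_zero_pos j hj, mul_zero, zero_smul]

/-- Quasi-associativity for `(-1)`-products: specialization of Borcherds at `m = 0, n = -1`. -/
lemma iterate_neg_one (a b c : V) (k : ℤ) (N : ℕ)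
    (h : ∀ j : ℕ, N ≤ j → W.nprod a (-1 - j) (W.nprod b (k + j) c)
        + W.nprod b (k - 1 - j) (W.nprod a j c) = 0) :
    W.nprod (W.nprod a (-1) b) k c
      = ∑ j ∈ Finset.range N, (W.nprod a (-1 - j) (W.nprod b (k + j) c)
          + W.nprod b (k - 1 - j) (W.nprod a j c)) := by
  have h0 := W.borch_trunc a b c 0 (-1) k 1 N ?_ ?_
  · simp only [Finset.sum_range_one, Nat.cast_zero, zchoose_zero', one_smul, add_zero,
      sub_zero, zero_add] at h0
    rw [h0]
    apply Finset.sum_congr rfl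
    intro j _
    rw [zchoose_neg_one, ← mul_pow, neg_mul_neg, one_mul, one_pow, one_smul,
      show Int.negOnePow (-1) = -1 by simp [Int.negOnePow_neg],
      show ((-1 : ℤˣ) : ℤ) = -1 from rfl, neg_smul, one_smul, sub_neg_eq_add,
      show (-1 : ℤ) + k - (j : ℤ) = k - 1 - j by ring]
  · intro j hj
    rw [zchoose_zero_pos j hj, zero_smul]
  · intro j hj
    rw [zchoose_neg_one, ← mul_pow, neg_mul_neg, one_mul, one_pow, one_smul,
      show Int.negOnePow (-1) = -1 by simp [Int.negOnePow_neg],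
      show ((-1 : ℤˣ) : ℤ) = -1 from rfl, neg_smul, one_smul, sub_neg_eq_add,
      show (0 : ℤ) + -1 - (j : ℤ) = -1 - j by ring,
      show (-1 : ℤ) + k - (j : ℤ) = k - 1 - j by ring, zero_add]
    exact h j hj

/-- Skew symmetry for `(-1)`-products when all the `T`-correction terms vanish. -/
lemma skew_neg_one' (a b : V)
    (h : ∀ j : ℕ, W.nprod (W.nprod a j b) (-2 - j) W.vac = 0) :
    W.nprod b (-1) a = W.nprod a (-1) b := by
  have h0 := W.borch_trunc a b W.vac (-1) 0 (-1) 0 1 ?_ ?_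
  · simp only [Finset.sum_range_zero, Finset.sum_range_one, Nat.cast_zero, pow_zero,
      zchoose_zero', one_mul, one_smul, Int.negOnePow_zero, Units.val_one, sub_zero,
      add_zero] at h0
    rw [show (0 : ℤ) + -1 = -1 by ring, W.prod_vac_neg_one, W.prod_vac_neg_one] at h0
    exact (sub_eq_zero.mp h0.symm).symm
  · intro j _
    rw [zero_add, show (-1 : ℤ) + -1 - (j : ℤ) = -2 - j by ring, h j, smul_zero]
  · intro j hj
    rw [zchoose_zero_pos j hj, mul_zero, zero_smul]

/-- Skew symmetry for `(n-1)`-products, `n ≥ 1`, when `a₍ₙ₊ⱼ₎b = 0` for all `j ≥ 0`. -/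
lemma skew_pos (a b : V) (n : ℤ) (_hn : 1 ≤ n) (h : ∀ j : ℕ, W.nprod a (n + j) b = 0) :
    W.nprod b (n - 1) a = (Int.negOnePow n : ℤ) • W.nprod a (n - 1) b := by
  have h0 := W.borch_trunc a b W.vac (-1) n (-1) 0 1 ?_ ?_
  · simp only [Finset.sum_range_zero, Finset.sum_range_one, Nat.cast_zero, pow_zero,
      zchoose_zero', one_mul, one_smul, sub_zero, add_zero] at h0
    rw [show (-1 : ℤ) + n = n - 1 by ring, show n + -1 = n - 1 by ring,
      W.prod_vac_neg_one, W.prod_vac_neg_one] at h0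
    have h1 : (Int.negOnePow n : ℤ) • W.nprod b (n - 1) a = W.nprod a (n - 1) b :=
      (sub_eq_zero.mp h0.symm).symm
    calc W.nprod b (n - 1) a
        = ((Int.negOnePow n : ℤ) * (Int.negOnePow n : ℤ)) • W.nprod b (n - 1) a := by
          rw [← Units.val_mul, Int.units_mul_self, Units.val_one, one_smul]
      _ = (Int.negOnePow n : ℤ) • W.nprod a (n - 1) b := by rw [mul_smul, h1]
  · intro j _
    rw [h j, W.np_zero_left, smul_zero]
  · intro j hj
    rw [W.prod_vac_nonneg b (-1 + j) (by omega), W.prod_vac_nonneg a (-1 + j) (by omega),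
      W.np_zero_right, W.np_zero_right, smul_zero, sub_zero, smul_zero]

end VertexAlgebraC

open VertexAlgebraC

/-- In the twisted CDO `D^{ch,tw} = D^{ch} ⊗ H_{ℙ¹}` on `ℙ¹` (the beta-gamma system
tensored with the commutative vertex algebra of differential polynomials in `λ*`), under
the map `e ↦ ∂_x`, `h ↦ −2(∂_x)₍₋₁₎x + λ*`, `f ↦ −(∂_x)₍₋₁₎x² − 2∂(x) + x₍₋₁₎λ*`,
the Sugawara-type central element `T = e₍₋₁₎f + f₍₋₁₎e + (1/2)h₍₋₁₎h` of `V_{−2}(sl₂)`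
maps to `(1/2)λ*₍₋₁₎λ* − ∂(λ*)` in `H_{ℙ¹}`. -/
theorem twisted_cdo_P1_sugawara {V : Type*} [AddCommGroup V] [Module ℂ V]
    (W : VertexAlgebraC V) (x Dx L : V)
    (hbg0 : W.nprod Dx 0 x = W.vac)
    (hbgx : ∀ n : ℤ, 0 ≤ n → W.nprod x n x = 0)
    (hbgD : ∀ n : ℤ, 0 ≤ n → W.nprod Dx n Dx = 0)
    (hbg1 : ∀ n : ℤ, 1 ≤ n → W.nprod Dx n x = 0)
    -- `λ*` generates a commutative vertex algebra commuting with the beta-gamma system: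
    (hLL : ∀ n : ℤ, 0 ≤ n → W.nprod L n L = 0)
    (hLx : ∀ n : ℤ, 0 ≤ n → W.nprod L n x = 0)
    (hxL : ∀ n : ℤ, 0 ≤ n → W.nprod x n L = 0)
    (hLD : ∀ n : ℤ, 0 ≤ n → W.nprod L n Dx = 0)
    (hDL : ∀ n : ℤ, 0 ≤ n → W.nprod Dx n L = 0) :
    let e := Dx
    let h := (-2 : ℂ) • W.nprod Dx (-1) x + L
    let f := - W.nprod Dx (-1) (W.nprod x (-1) x) - (2 : ℂ) • W.tr x
                + W.nprod x (-1) L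
    W.nprod e (-1) f + W.nprod f (-1) e + (2⁻¹ : ℂ) • W.nprod h (-1) h
      = (2⁻¹ : ℂ) • W.nprod L (-1) L - W.tr L := by
  intro e h f
  -- skew-symmetry facts
  have hXD1 : ∀ n : ℤ, 1 ≤ n → W.nprod x n Dx = 0 := by
    intro n hn
    have hs := W.skew_pos Dx x (n + 1) (by omega) (fun j => hbg1 _ (by omega))
    rw [show n + 1 - 1 = n by ring] at hs
    rw [hs, hbg1 n hn, smul_zero]
  have hXD0 : W.nprod x 0 Dx = - W.vac := by
    have hs := W.skew_pos Dx x 1 le_rfl (fun j => hbg1 _ (by omega))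
    norm_num [hbg0, Int.negOnePow_one] at hs
    exact hs
  have hXDm : W.nprod x (-1) Dx = W.nprod Dx (-1) x := by
    apply W.skew_neg_one'
    intro j
    match j with
    | 0 => rw [Nat.cast_zero, hbg0, W.vac_prod]; norm_num
    | (j+1) => rw [hbg1 _ (by push_cast; omega), W.np_zero_left]
  have hLDm : W.nprod L (-1) Dx = W.nprod Dx (-1) L :=
    W.skew_neg_one' Dx L (fun j => by rw [hDL _ (by positivity), W.np_zero_left])
  have hLXm : W.nprod L (-1) x = W.nprod x (-1) L :=
    W.skew_neg_one' x L (fun j => by rw [hxL _ (by positivity), W.np_zero_left])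
  -- positive products with the quadratic A = (∂x)₍₋₁₎x
  have hXA0 : W.nprod x 0 (W.nprod Dx (-1) x) = -x := by
    have hw := W.wick x Dx x 0 (-1) 1 (fun j hj => hXD1 j (by omega))
    simp only [Finset.sum_range_one, Nat.cast_zero, zchoose_zero', one_smul] at hw
    rw [hbgx 0 le_rfl, W.np_zero_right, zero_add, hXD0, W.np_neg_left,
      show (0:ℤ) + -1 - 0 = -1 by ring, W.vac_prod, if_pos rfl] at hw
    exact hw
  have hXA1 : ∀ m : ℤ, 1 ≤ m → W.nprod x m (W.nprod Dx (-1) x) = 0 := by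
    intro m hm
    have hw := W.wick x Dx x m (-1) 1 (fun j hj => hXD1 j (by omega))
    simp only [Finset.sum_range_one, Nat.cast_zero, zchoose_zero', one_smul] at hw
    rw [hbgx m (by omega), W.np_zero_right, zero_add, hXD0, W.np_neg_left,
      W.vac_prod, if_neg (by omega), neg_zero] at hw
    exact hw
  have hDA0 : W.nprod Dx 0 (W.nprod Dx (-1) x) = Dx := by
    have hw := W.wick Dx Dx x 0 (-1) 0 (fun j _ => hbgD j (by omega))
    rw [Finset.sum_range_zero, add_zero, hbg0, W.prod_vac_neg_one] at hw
    exact hw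
  have hDA1 : ∀ m : ℤ, 1 ≤ m → W.nprod Dx m (W.nprod Dx (-1) x) = 0 := by
    intro m hm
    have hw := W.wick Dx Dx x m (-1) 0 (fun j _ => hbgD j (by omega))
    rw [Finset.sum_range_zero, add_zero, hbg1 m hm, W.np_zero_right] at hw
    exact hw
  -- products of the quadratic B = x₍₋₁₎x with ∂x
  have hBD1 : ∀ k : ℤ, 1 ≤ k → W.nprod (W.nprod x (-1) x) k Dx = 0 := by
    intro k hk
    have hi := W.iterate_neg_one x x Dx k 0 ?_
    · simpa using hi
    · intro j _
      rw [hXD1 (k + j) (by omega), W.np_zero_right, zero_add]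
      rcases Nat.eq_zero_or_pos j with h0 | h0
      · subst h0
        rw [Nat.cast_zero, hXD0, W.np_neg_right,
          W.prod_vac_nonneg _ _ (by omega : (0:ℤ) ≤ k - 1 - 0), neg_zero]
      · rw [hXD1 j (by omega), W.np_zero_right]
  have hBD0 : W.nprod (W.nprod x (-1) x) 0 Dx = -x + -x := by
    have hi := W.iterate_neg_one x x Dx 0 1 ?_
    · norm_num at hi
      rw [hXD0, W.np_neg_right, W.prod_vac_neg_one] at hi
      exact hi
    · intro j hj
      rw [hXD1 (0 + j) (by omega), W.np_zero_right, zero_add,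
        hXD1 j (by omega), W.np_zero_right]
  have hBDm : W.nprod (W.nprod x (-1) x) (-1) Dx
      = W.nprod x (-1) (W.nprod Dx (-1) x) - W.nprod x (-2) W.vac
          - W.nprod x (-2) W.vac := by
    have hi := W.iterate_neg_one x x Dx (-1) 2 ?_
    · norm_num [Finset.sum_range_succ] at hi
      rw [hXDm, hXD0, hXD1 1 le_rfl, W.np_neg_right, W.np_zero_right] at hi
      rw [hi]; abel
    · intro j hj
      rw [hXD1 (-1 + j) (by omega), W.np_zero_right, zero_add,
        hXD1 j (by omega), W.np_zero_right]
  -- noncommutative Wick rearrangements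
  have hF1 : W.nprod Dx (-1) (W.nprod x (-1) x)
      = W.nprod x (-1) (W.nprod Dx (-1) x) := by
    have hw := W.wick Dx x x (-1) (-1) 1 (fun j hj => hbg1 j (by omega))
    simp only [Finset.sum_range_one, Nat.cast_zero] at hw
    rw [hbg0, show (-1:ℤ) + -1 - 0 = -2 by ring, W.vac_prod, if_neg (by omega),
      smul_zero, add_zero] at hw
    exact hw
  have hDTX : W.nprod Dx (-1) (W.nprod x (-2) W.vac) = W.nprod x (-2) Dx := by
    have hw := W.wick Dx x W.vac (-1) (-2) 1 (fun j hj => hbg1 j (by omega))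
    simp only [Finset.sum_range_one, Nat.cast_zero] at hw
    rw [hbg0, show (-1:ℤ) + -2 - 0 = -3 by ring, W.vac_prod, if_neg (by omega),
      smul_zero, add_zero, W.prod_vac_neg_one] at hw
    exact hw
  have hDXL : W.nprod Dx (-1) (W.nprod x (-1) L)
      = W.nprod x (-1) (W.nprod Dx (-1) L) := by
    have hw := W.wick Dx x L (-1) (-1) 1 (fun j hj => hbg1 j (by omega))
    simp only [Finset.sum_range_one, Nat.cast_zero] at hw
    rw [hbg0, show (-1:ℤ) + -1 - 0 = -2 by ring, W.vac_prod, if_neg (by omega),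
      smul_zero, add_zero] at hw
    exact hw
  have hPP : W.nprod Dx (-1) (W.nprod x (-1) (W.nprod Dx (-1) x))
      = W.nprod x (-1) (W.nprod Dx (-1) (W.nprod Dx (-1) x)) := by
    have hw := W.wick Dx x (W.nprod Dx (-1) x) (-1) (-1) 1 (fun j hj => hbg1 j (by omega))
    simp only [Finset.sum_range_one, Nat.cast_zero] at hw
    rw [hbg0, show (-1:ℤ) + -1 - 0 = -2 by ring, W.vac_prod, if_neg (by omega),
      smul_zero, add_zero] at hw
    exact hw
  -- translation-operator identities
  have hTA : W.nprod (W.nprod Dx (-1) x) (-2) W.vac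
      = W.nprod Dx (-2) x + W.nprod x (-2) Dx := by
    have hb := W.borch_trunc Dx x W.vac (-1) (-1) (-1) 2 1 ?_ ?_
    · norm_num [Finset.sum_range_succ, zchoose_neg_one, Int.negOnePow_neg,
        Int.negOnePow_one] at hb
      rw [W.prod_vac_neg_one, W.prod_vac_neg_one, hbg0, W.vac_prod,
        if_neg (by omega : ¬(-3 : ℤ) = -1), neg_zero, add_zero] at hb
      exact hb
    · intro j hj
      rw [hbg1 (-1 + j) (by omega), W.np_zero_left, smul_zero]
    · intro j hj
      rw [W.prod_vac_nonneg x (-1 + j) (by omega),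
        W.prod_vac_nonneg Dx (-1 + j) (by omega), W.np_zero_right, W.np_zero_right,
        smul_zero, sub_zero, smul_zero]
  have hD2x : W.nprod Dx (-2) x
      = W.nprod (W.nprod Dx (-1) x) (-2) W.vac - W.nprod x (-2) Dx := by
    rw [hTA]; abel
  have hTXD : W.nprod (W.nprod x (-2) W.vac) (-1) Dx = W.nprod x (-2) Dx := by
    have hb := W.borch_trunc x W.vac Dx 0 (-2) (-1) 1 1 ?_ ?_
    · norm_num [zchoose_zero'] at hb
      rw [W.vac_prod, if_pos rfl, W.vac_prod, if_neg (by omega : ¬(-3 : ℤ) = -1),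
        smul_zero, sub_zero] at hb
      exact hb
    · intro j hj
      rw [zchoose_zero_pos j hj, zero_smul]
    · intro j hj
      rw [W.vac_prod, if_neg (by omega), W.np_zero_right,
        W.vac_prod (-2 + -1 - j), if_neg (by omega), smul_zero, sub_zero, smul_zero]
  -- the three quadratic reorderings
  have hF1D : W.nprod (W.nprod Dx (-1) (W.nprod x (-1) x)) (-1) Dx
      = W.nprod x (-1) (W.nprod Dx (-1) (W.nprod Dx (-1) x))
        - W.nprod (W.nprod Dx (-1) x) (-2) W.vac
        - W.nprod (W.nprod Dx (-1) x) (-2) W.vac := by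
    have hi := W.iterate_neg_one Dx (W.nprod x (-1) x) Dx (-1) 2 ?_
    · norm_num [Finset.sum_range_succ] at hi
      rw [hBDm, hBD0, hbgD 0 le_rfl, hbgD 1 zero_le_one, W.np_zero_right,
        W.np_zero_right, W.np_sub_right, W.np_sub_right, hPP, hDTX,
        W.nprod_add_right, W.np_neg_right, hD2x] at hi
      rw [hi]; abel
    · intro j hj
      rw [hBD1 (-1 + j) (by omega), W.np_zero_right, zero_add,
        hbgD j (by omega), W.np_zero_right]
  have hXLD : W.nprod (W.nprod x (-1) L) (-1) Dx
      = W.nprod x (-1) (W.nprod Dx (-1) L) - W.nprod L (-2) W.vac := by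
    have hi := W.iterate_neg_one x L Dx (-1) 1 ?_
    · norm_num at hi
      rw [hLDm, hXD0, W.np_neg_right] at hi
      rw [hi]; abel
    · intro j hj
      rw [hLD (-1 + j) (by omega), W.np_zero_right, zero_add,
        hXD1 j (by omega), W.np_zero_right]
  have hAL : W.nprod (W.nprod Dx (-1) x) (-1) L
      = W.nprod x (-1) (W.nprod Dx (-1) L) := by
    have hi := W.iterate_neg_one Dx x L (-1) 1 ?_
    · norm_num at hi
      rw [hDXL, hDL 0 le_rfl, W.np_zero_right, add_zero] at hi
      exact hi
    · intro j hj
      rw [hxL (-1 + j) (by omega), W.np_zero_right, zero_add,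
        hDL j (by omega), W.np_zero_right]
  have hLA : W.nprod L (-1) (W.nprod Dx (-1) x)
      = W.nprod x (-1) (W.nprod Dx (-1) L) := by
    have hw := W.wick L Dx x (-1) (-1) 0 (fun j _ => hLD j (by omega))
    rw [Finset.sum_range_zero, add_zero, hLXm, hDXL] at hw
    exact hw
  have hAA : W.nprod (W.nprod Dx (-1) x) (-1) (W.nprod Dx (-1) x)
      = W.nprod x (-1) (W.nprod Dx (-1) (W.nprod Dx (-1) x))
        + W.nprod x (-2) Dx + W.nprod x (-2) Dx
        - W.nprod (W.nprod Dx (-1) x) (-2) W.vac := by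
    have hi := W.iterate_neg_one Dx x (W.nprod Dx (-1) x) (-1) 2 ?_
    · norm_num [Finset.sum_range_succ] at hi
      rw [hPP, hDA0, hXA0, hDA1 1 le_rfl, W.np_zero_right, W.np_neg_right,
        hD2x] at hi
      rw [hi]; abel
    · intro j hj
      rw [hXA1 (-1 + j) (by omega), W.np_zero_right, zero_add,
        hDA1 j (by omega), W.np_zero_right]
  -- final assembly
  show W.nprod Dx (-1)
        (- W.nprod Dx (-1) (W.nprod x (-1) x) - (2:ℂ) • W.nprod x (-2) W.vac
          + W.nprod x (-1) L)
      + W.nprod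
        (- W.nprod Dx (-1) (W.nprod x (-1) x) - (2:ℂ) • W.nprod x (-2) W.vac
          + W.nprod x (-1) L) (-1) Dx
      + (2⁻¹ : ℂ) • W.nprod ((-2:ℂ) • W.nprod Dx (-1) x + L) (-1)
          ((-2:ℂ) • W.nprod Dx (-1) x + L)
      = (2⁻¹ : ℂ) • W.nprod L (-1) L - W.nprod L (-2) W.vac
  simp only [W.nprod_add_left, W.nprod_add_right, W.np_sub_left, W.np_sub_right,
    W.np_neg_left, W.np_neg_right, W.nprod_smul_left, W.nprod_smul_right]
  rw [hF1D, hTXD, hXLD, hAA, hAL, hLA, hF1, hPP, hDTX, hDXL]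
  module
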